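/- Let E be a topological graph. Then the boundary-path space ∂E := E^∞ ⊔ {μ ∈ E^* : s(μ) ∈ E_sg^0} coincides exactly with the set ∂_Y E of Yeend boundary paths of E. -/

import Mathlib

open Set Topology Filter

namespace TopGraphPaper

variable {V E : Type*}

/-- The set `E^0_fin` of vertices with a neighborhood whose closure has compact `r`-preimage. -/
def Vfin [TopologicalSpace V] [TopologicalSpace E] (r : E → V) : Set V :=
  {v | ∃ N : Set V, IsOpen N ∧ v ∈ N ∧ IsCompact (r ⁻¹' closure N)}

/-- The set `E^0_sce` of sources. -/
def Vsce [TopologicalSpace V] (r : E → V) : Set V := (closure (Set.range r))ᶜ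

/-- The set `E^0_rg` of regular vertices. -/
def Vrg [TopologicalSpace V] [TopologicalSpace E] (r : E → V) : Set V :=
  Vfin r \ closure (Vsce r)

/-- The set `E^0_sg` of singular vertices. -/
def Vsg [TopologicalSpace V] [TopologicalSpace E] (r : E → V) : Set V := (Vrg r)ᶜ

/-- Compatibility condition defining a finite path: the source of each edge is the
range of the next one. -/
def IsPath (r s : E → V) {n : ℕ} (μ : Fin n → E) : Prop :=
  ∀ (i : ℕ) (h : i + 1 < n), s (μ ⟨i, by omega⟩) = r (μ ⟨i + 1, h⟩)

/-- The space `E^n` of paths of length `n` (`n ≥ 1`), topologized as a subspace of `(E^1)^n`. -/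
abbrev PathSpace (r s : E → V) (n : ℕ) := {μ : Fin n → E // IsPath r s μ}

/-- The finite-path space `E^* = ⨿ₙ E^n`: a path of length `0` is a vertex, and a path of
positive length `n+1` lives in `PathSpace r s (n+1)`.  It carries the disjoint-union
topology. -/
abbrev FinPaths (r s : E → V) := V ⊕ (Σ n : ℕ, PathSpace r s (n + 1))

/-- The infinite-path space `E^∞`. -/
abbrev InfPaths (r s : E → V) := {μ : ℕ → E // ∀ i, s (μ i) = r (μ (i + 1))}

/-- The range of a finite path. -/
def finRng (r s : E → V) : FinPaths r s → V :=
  Sum.elim id fun x => r (x.2.1 0)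

/-- The source of a finite path. -/
def finSrc (r s : E → V) : FinPaths r s → V :=
  Sum.elim id fun x => s (x.2.1 (Fin.last x.1))

/-- The length of a finite path. -/
def finLen (r s : E → V) : FinPaths r s → ℕ :=
  Sum.elim (fun _ => 0) fun x => x.1 + 1

/-- `IsPrefixOf r s α λ` : the finite path `α` is an initial segment of the finite path `λ`
(equivalently, `λ = α β` for some finite path `β`). -/
def IsPrefixOf (r s : E → V) : FinPaths r s → FinPaths r s → Prop
  | Sum.inl v, q => v = finRng r s q
  | Sum.inr _, Sum.inl _ => False
  | Sum.inr a, Sum.inr b =>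
      ∃ h : a.1 ≤ b.1, ∀ j : Fin (a.1 + 1), a.2.1 j = b.2.1 (Fin.castLE (by omega) j)

/-- `K ⊆ E^*` is exhaustive for `W ⊆ E^0`. -/
def Exhaustive (r s : E → V) (K : Set (FinPaths r s)) (W : Set V) : Prop :=
  K ⊆ finRng r s ⁻¹' W ∧
    ∀ q : FinPaths r s, finRng r s q ∈ W →
      ∃ a ∈ K, IsPrefixOf r s a q ∨ IsPrefixOf r s q a

/-- The segment `μ_{m+1} ⋯ μ_{m+1+j}` (0-indexed: edges `m, …, m+j`) of an infinite path. -/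
def infSeg (r s : E → V) (μ : InfPaths r s) (m j : ℕ) : FinPaths r s :=
  Sum.inr ⟨j, ⟨fun i => μ.1 (m + i.1), fun i _ => μ.2 (m + i)⟩⟩

/-- The segment with edges `m, …, m+j` (0-indexed) of a finite path of length `n+1`. -/
def finSeg (r s : E → V) {n : ℕ} (a : PathSpace r s (n + 1)) (m j : ℕ)
    (hmj : m + j ≤ n) : FinPaths r s :=
  Sum.inr ⟨j, ⟨fun i => a.1 ⟨m + i.1, by have := i.isLt; omega⟩,
    fun i h => a.2 (m + i) (by omega)⟩⟩

/-- Yeend's boundary-path condition for an infinite path. -/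
def YeendInf [TopologicalSpace V] [TopologicalSpace E] (r s : E → V)
    (μ : InfPaths r s) : Prop :=
  ∀ (m : ℕ) (K : Set (FinPaths r s)), IsCompact K →
    finRng r s '' K ∈ nhds (r (μ.1 m)) →
    Exhaustive r s K (finRng r s '' K) →
    (Sum.inl (r (μ.1 m)) ∈ K ∨ ∃ j : ℕ, infSeg r s μ m j ∈ K)

/-- Yeend's boundary-path condition for a finite path. -/
def YeendFin [TopologicalSpace V] [TopologicalSpace E] (r s : E → V)
    (μ : FinPaths r s) : Prop :=
  (∀ x : Σ n : ℕ, PathSpace r s (n + 1), μ = Sum.inr x →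
    ∀ (m : ℕ) (hm : m ≤ x.1) (K : Set (FinPaths r s)), IsCompact K →
      finRng r s '' K ∈ nhds (r (x.2.1 ⟨m, by omega⟩)) →
      Exhaustive r s K (finRng r s '' K) →
      (Sum.inl (r (x.2.1 ⟨m, by omega⟩)) ∈ K ∨
        ∃ (j : ℕ) (hj : m + j ≤ x.1), finSeg r s x.2 m j hj ∈ K)) ∧
  (∀ K : Set (FinPaths r s), IsCompact K →
    finRng r s '' K ∈ nhds (finSrc r s μ) →
    Exhaustive r s K (finRng r s '' K) →
    Sum.inl (finSrc r s μ) ∈ K)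


section Aux

variable [TopologicalSpace V] [TopologicalSpace E]

/-- A single edge as a finite path. -/
def single (r s : E → V) (e : E) : FinPaths r s :=
  Sum.inr ⟨0, ⟨fun _ => e, fun i h => by omega⟩⟩

lemma continuous_single (r s : E → V) : Continuous (single r s) := by
  exact continuous_inr.comp <| (continuous_sigmaMk (σ := fun n => PathSpace r s (n+1)) (i := 0)).comp
    (Continuous.subtype_mk (continuous_pi fun _ => continuous_id) _)

lemma isCompact_slice {r s : E → V} {K : Set (FinPaths r s)} (hK : IsCompact K) (n : ℕ) :
    IsCompact {x : PathSpace r s (n+1) | Sum.inr ⟨n, x⟩ ∈ K} := by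
  have hemb : Topology.IsEmbedding (fun x : PathSpace r s (n+1) => (Sum.inr ⟨n, x⟩ : FinPaths r s)) :=
    Topology.IsEmbedding.inr.comp Topology.IsEmbedding.sigmaMk
  rw [hemb.isCompact_iff]
  have h2 : (fun x : PathSpace r s (n+1) => (Sum.inr ⟨n, x⟩ : FinPaths r s)) ''
      {x | Sum.inr ⟨n, x⟩ ∈ K} =
      K ∩ Set.range (fun x : PathSpace r s (n+1) => (Sum.inr ⟨n, x⟩ : FinPaths r s)) := by
    rw [← Set.image_preimage_eq_inter_range]; rfl
  rw [h2]
  exact hK.inter_right (Topology.IsClosedEmbedding.inr.comp Topology.IsClosedEmbedding.sigmaMk).isClosed_range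

lemma isCompact_inlPre {r s : E → V} {K : Set (FinPaths r s)} (hK : IsCompact K) :
    IsCompact {v : V | (Sum.inl v : FinPaths r s) ∈ K} := by
  have hemb : Topology.IsEmbedding (fun v : V => (Sum.inl v : FinPaths r s)) := Topology.IsEmbedding.inl
  rw [hemb.isCompact_iff]
  have h2 : (fun v : V => (Sum.inl v : FinPaths r s)) '' {v | Sum.inl v ∈ K} =
      K ∩ Set.range (fun v : V => (Sum.inl v : FinPaths r s)) := by
    rw [← Set.image_preimage_eq_inter_range]; rfl
  rw [h2]
  exact hK.inter_right Topology.IsClosedEmbedding.inl.isClosed_range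

lemma continuous_finLen (r s : E → V) : Continuous (finLen r s) := by
  apply Continuous.sumElim continuous_const
  apply continuous_sigma
  intro n
  exact (continuous_const : Continuous fun _ : PathSpace r s (n+1) => n + 1)

lemma exists_finLen_bound {r s : E → V} {K : Set (FinPaths r s)} (hK : IsCompact K) :
    ∃ N, ∀ a ∈ K, finLen r s a ≤ N := by
  have hfin : (finLen r s '' K).Finite := isCompact_iff_finite.mp (hK.image (continuous_finLen r s))
  obtain ⟨N, hN⟩ := hfin.bddAbove
  exact ⟨N, fun a ha => hN ⟨a, ha, rfl⟩⟩

def edgeSet (r s : E → V) (K : Set (FinPaths r s)) (i : ℕ) : Set E :=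
  {e | ∃ x : Σ n : ℕ, PathSpace r s (n+1), Sum.inr x ∈ K ∧ ∃ h : i < x.1 + 1, x.2.1 ⟨i, h⟩ = e}

lemma isCompact_edgeSet {r s : E → V} {K : Set (FinPaths r s)} (hK : IsCompact K) (i : ℕ) :
    IsCompact (edgeSet r s K i) := by
  obtain ⟨N, hN⟩ := exists_finLen_bound hK
  have key : edgeSet r s K i = ⋃ n ∈ Finset.range N, (if h : i < n + 1 then
      (fun x : PathSpace r s (n+1) => x.1 ⟨i, h⟩) '' {x | Sum.inr ⟨n, x⟩ ∈ K} else ∅) := by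
    ext e
    simp only [edgeSet, Set.mem_setOf_eq, Set.mem_iUnion, Finset.mem_range, exists_prop]
    constructor
    · rintro ⟨⟨n, x⟩, hxK, h, rfl⟩
      have hb := hN _ hxK
      simp only [finLen, Sum.elim_inr] at hb
      refine ⟨n, by omega, ?_⟩
      rw [dif_pos h]
      exact ⟨x, hxK, rfl⟩
    · rintro ⟨n, hn, he⟩
      by_cases h : i < n + 1
      · rw [dif_pos h] at he
        obtain ⟨x, hxK, rfl⟩ := he
        exact ⟨⟨n, x⟩, hxK, h, rfl⟩
      · rw [dif_neg h] at he
        exact absurd he (Set.notMem_empty e)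
  rw [key]
  apply Set.Finite.isCompact_biUnion (Finset.range N).finite_toSet
  intro n _
  split_ifs with h
  · exact (isCompact_slice hK n).image ((continuous_apply _).comp continuous_subtype_val)
  · exact isCompact_empty

lemma yeendInf_all {r s : E → V} (μ : InfPaths r s) : YeendInf r s μ := by
  intro m K hK hW hex
  obtain ⟨N, hN⟩ := exists_finLen_bound hK
  obtain ⟨a, haK, hcomp⟩ := hex.2 (infSeg r s μ m N) (by
    have h : finRng r s (infSeg r s μ m N) = r (μ.1 m) := by simp [infSeg, finRng]
    rw [h]; exact mem_of_mem_nhds hW)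
  rcases hcomp with h | h
  · rcases a with v | ⟨n, p, hp⟩
    · left
      have hv : v = r (μ.1 m) := by simpa [IsPrefixOf, infSeg, finRng] using h
      rwa [hv] at haK
    · right
      obtain ⟨hle, hj⟩ := h
      refine ⟨n, ?_⟩
      have he : (⟨p, hp⟩ : PathSpace r s (n+1)) =
          ⟨fun i => μ.1 (m + i.1), fun i hi => μ.2 (m + i)⟩ := by
        apply Subtype.ext
        funext i
        exact hj i
      show Sum.inr ⟨n, _⟩ ∈ K
      rw [← he]
      exact haK
  · rcases a with v | ⟨n, p, hp⟩
    · simp only [IsPrefixOf, infSeg] at h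
    · obtain ⟨hle, _⟩ := h
      have hle' : N ≤ n := hle
      have := hN _ haK
      simp only [finLen, Sum.elim_inr] at this
      omega

lemma part2_of_singular {r s : E → V} [LocallyCompactSpace V] [T2Space V] [T2Space E]
    (hr : Continuous r) {v : V} (hv : v ∈ Vsg r)
    {K : Set (FinPaths r s)} (hK : IsCompact K) (hW : finRng r s '' K ∈ nhds v)
    (hex : Exhaustive r s K (finRng r s '' K)) : (Sum.inl v : FinPaths r s) ∈ K := by
  set W := finRng r s '' K with hWdef
  have hvW : v ∈ interior W := mem_interior_iff_mem_nhds.mpr hW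
  rw [Vsg, Vrg] at hv
  simp only [Set.mem_compl_iff, Set.mem_diff, not_and, not_not] at hv
  have hclK : IsClosed {w | (Sum.inl w : FinPaths r s) ∈ K} := (isCompact_inlPre hK).isClosed
  by_cases hfin : v ∈ Vfin r
  · -- v ∈ closure (Vsce r)
    have hvc : v ∈ closure (Vsce r) := hv hfin
    have hsub : interior W ∩ Vsce r ⊆ {w | (Sum.inl w : FinPaths r s) ∈ K} := by
      rintro w ⟨hwW, hwsce⟩
      obtain ⟨a, haK, hcomp⟩ := hex.2 (Sum.inl w) (interior_subset hwW)
      rcases hcomp with h | h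
      · rcases a with v' | b
        · have hv' : v' = w := h
          rwa [hv'] at haK
        · exact absurd h (by simp [IsPrefixOf])
      · rcases a with v' | b
        · have hv' : w = v' := h
          rwa [← hv'] at haK
        · exfalso
          have hw : w = r (b.2.1 0) := h
          exact hwsce (subset_closure ⟨b.2.1 0, hw.symm⟩)
    have hmem : v ∈ closure (interior W ∩ Vsce r) := isOpen_interior.inter_closure ⟨hvW, hvc⟩
    have := closure_mono hsub hmem
    rwa [hclK.closure_eq] at this
  · -- v ∉ Vfin
    by_contra hnK
    have hopen : IsOpen (interior W ∩ {w | (Sum.inl w : FinPaths r s) ∈ K}ᶜ) :=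
      isOpen_interior.inter hclK.isOpen_compl
    obtain ⟨C, hCcomp, hvC, hCsub⟩ := exists_compact_subset hopen ⟨hvW, hnK⟩
    have hpre : r ⁻¹' C ⊆ edgeSet r s K 0 := by
      intro e he
      have heW : r e ∈ W := interior_subset (hCsub he).1
      obtain ⟨a, haK, hcomp⟩ := hex.2 (single r s e) (by simpa [single, finRng] using heW)
      rcases hcomp with h | h
      · rcases a with v' | b
        · exfalso
          have hv' : v' = r e := h
          exact (hCsub he).2 (by rwa [hv'] at haK)
        · obtain ⟨hle, hj⟩ := h
          exact ⟨b, haK, by omega, hj ⟨0, by omega⟩⟩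
      · rcases a with v' | b
        · exact absurd h (by simp [IsPrefixOf, single])
        · obtain ⟨hle, hj⟩ := h
          exact ⟨b, haK, by omega, (hj 0).symm⟩
    refine absurd ?_ hfin
    refine ⟨interior C, isOpen_interior, hvC, ?_⟩
    have hsub2 : r ⁻¹' closure (interior C) ⊆ edgeSet r s K 0 := fun e he =>
      hpre (closure_minimal interior_subset hCcomp.isClosed he)
    exact (isCompact_edgeSet hK 0).of_isClosed_subset (isClosed_closure.preimage hr) hsub2

lemma regular_witness {r s : E → V} [T2Space V] (hr : Continuous r) {v : V} (hv : v ∈ Vrg r) :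
    ∃ K : Set (FinPaths r s), IsCompact K ∧ finRng r s '' K ∈ nhds v ∧
      Exhaustive r s K (finRng r s '' K) ∧ (Sum.inl v : FinPaths r s) ∉ K := by
  obtain ⟨⟨N, hNopen, hvN, hNcomp⟩, hvnc⟩ := hv
  set K : Set (FinPaths r s) := single r s '' (r ⁻¹' closure N) with hKdef
  set S : Set V := r '' (r ⁻¹' closure N) with hSdef
  have hWS : finRng r s '' K = S := by
    rw [hKdef, Set.image_image]; rfl
  have hScl : IsClosed S := (hNcomp.image hr).isClosed
  have hSsub : S ⊆ closure N := by rintro w ⟨e, he, rfl⟩; exact he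
  refine ⟨K, hNcomp.image (continuous_single r s), ?_, ⟨?_, ?_⟩, ?_⟩
  · -- neighborhood
    rw [hWS]
    refine Filter.mem_of_superset ((hNopen.inter ((isClosed_closure (s := Vsce r)).isOpen_compl)).mem_nhds
      ⟨hvN, hvnc⟩) ?_
    rintro w ⟨hwN, hwnc⟩
    have hwcr : w ∈ closure (Set.range r) := by
      by_contra hc
      exact hwnc (subset_closure hc)
    have h1 : w ∈ closure (N ∩ Set.range r) := hNopen.inter_closure ⟨hwN, hwcr⟩
    have h2 : N ∩ Set.range r ⊆ S := by
      rintro u ⟨huN, e, rfl⟩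
      exact ⟨e, subset_closure huN, rfl⟩
    have := closure_mono h2 h1
    rwa [hScl.closure_eq] at this
  · -- K ⊆ finRng ⁻¹' (finRng '' K)
    intro a ha
    exact Set.mem_image_of_mem _ ha
  · -- exhaustivity
    intro q hq
    obtain ⟨a0, ha0, heq⟩ := hq
    rcases q with w | b
    · exact ⟨a0, ha0, Or.inr (show w = finRng r s a0 from heq.symm)⟩
    · have heS : r (b.2.1 0) ∈ S := by
        rw [← hWS]; exact ⟨a0, ha0, heq⟩
      have heN : b.2.1 0 ∈ r ⁻¹' closure N := hSsub heS
      refine ⟨single r s (b.2.1 0), Set.mem_image_of_mem _ heN, Or.inl ?_⟩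
      refine ⟨show 0 ≤ b.1 from Nat.zero_le _, ?_⟩
      intro j
      have hj1 : (j : ℕ) < 1 := j.isLt
      have hj0 : (Fin.castLE (show 0 + 1 ≤ b.1 + 1 by omega) j : Fin (b.1 + 1)) = 0 := by
        apply Fin.ext
        have h0 : (j : ℕ) = 0 := by omega
        simp [Fin.castLE, h0]
      rw [hj0]
  · -- inl v ∉ K
    rintro ⟨e, -, h⟩
    simp [single] at h

lemma fcg {n : ℕ} (f : Fin n → E) {i j : Fin n} (h : (i : ℕ) = (j : ℕ)) : f i = f j :=
  congrArg f (Fin.ext h)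

lemma perturb {r s : E → V} (hs : IsLocalHomeomorph s) (hr : Continuous r) :
    ∀ (L : ℕ) (ℓ : Fin (L+1) → E), IsPath r s ℓ →
    ∃ (O : Set V) (φ : V → Fin (L+1) → E), IsOpen O ∧ s (ℓ (Fin.last L)) ∈ O ∧
      ContinuousOn φ O ∧ (∀ w, IsPath r s (φ w)) ∧
      (∀ w ∈ O, s (φ w (Fin.last L)) = w) ∧ φ (s (ℓ (Fin.last L))) = ℓ := by
  intro L
  induction L with
  | zero =>
    intro ℓ hℓ
    obtain ⟨e, he, hse⟩ := hs (ℓ (Fin.last 0))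
    refine ⟨e.target, fun w _ => e.symm w, e.open_target, ?_, ?_, ?_, ?_, ?_⟩
    · rw [hse]; exact e.map_source he
    · exact continuousOn_pi.mpr fun _ => e.continuousOn_symm
    · intro w i h; omega
    · intro w hw
      rw [hse]; exact e.right_inv hw
    · funext i
      have hi : i = Fin.last 0 := Fin.ext (by have := i.isLt; omega)
      rw [hi]
      show e.symm (s (ℓ (Fin.last 0))) = ℓ (Fin.last 0)
      rw [hse]
      exact e.left_inv he
  | succ L IH =>
    intro ℓ hℓ
    classical
    obtain ⟨O', ψ, hO'open, hvO', hψcont, hψpath, hψsrc, hψv⟩ := IH (fun i => ℓ i.succ)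
      (fun i h => hℓ (i+1) (by omega))
    obtain ⟨e, he0, hse⟩ := hs (ℓ ⟨0, by omega⟩)
    have hgcont : ContinuousOn (fun w => r (ψ w 0)) O' :=
      hr.comp_continuousOn ((continuousOn_pi.mp hψcont) 0)
    set O : Set V := O' ∩ (fun w => r (ψ w 0)) ⁻¹' e.target with hOdef
    have hOopen : IsOpen O := hgcont.isOpen_inter_preimage hO'open e.open_target
    set v : V := s (ℓ (Fin.last (L+1))) with hvdef
    have hvO'' : v ∈ O' := hvO'
    have hψv' : ψ v = fun i => ℓ i.succ := hψv
    have hr0 : r (ψ v 0) = s (ℓ ⟨0, by omega⟩) := by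
      have h2 : ψ v 0 = ℓ ⟨0 + 1, by omega⟩ := by
        rw [hψv']
        exact fcg ℓ (by simp)
      rw [h2]
      exact (hℓ 0 (by omega)).symm
    have hvO : v ∈ O := by
      refine ⟨hvO'', ?_⟩
      show r (ψ v 0) ∈ e.target
      rw [hr0, hse]
      exact e.map_source he0
    set φ0 : V → Fin (L+2) → E := fun w => Fin.cons (e.symm (r (ψ w 0))) (ψ w) with hφ0def
    set φ : V → Fin (L+2) → E := fun w => if w ∈ O then φ0 w else ℓ with hφdef
    have hφeq : Set.EqOn φ φ0 O := fun w hw => by simp only [hφdef, if_pos hw]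
    refine ⟨O, φ, hOopen, hvO, ?_, ?_, ?_, ?_⟩
    · -- continuity
      refine ContinuousOn.congr ?_ hφeq
      refine continuousOn_pi.mpr fun i => ?_
      refine Fin.cases ?_ ?_ i
      · simp only [hφ0def, Fin.cons_zero]
        refine ContinuousOn.comp (t := e.target) e.continuousOn_symm
          (hgcont.mono Set.inter_subset_left) ?_
        intro w hw
        exact hw.2
      · intro j
        simp only [hφ0def, Fin.cons_succ]
        exact ((continuousOn_pi.mp hψcont) j).mono Set.inter_subset_left
    · -- IsPath
      intro w
      by_cases hw : w ∈ O
      · simp only [hφdef, if_pos hw]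
        intro i h
        match i, h with
        | 0, h =>
          show s (e.symm (r (ψ w 0))) = r (ψ w ⟨0, by omega⟩)
          have : s (e.symm (r (ψ w 0))) = r (ψ w 0) := by
            rw [hse]; exact e.right_inv hw.2
          rw [this]
          exact congrArg r (fcg (ψ w) (by simp))
        | (i+1), h =>
          show s (ψ w ⟨i, by omega⟩) = r (ψ w ⟨i + 1, by omega⟩)
          exact hψpath w i (by omega)
      · simp only [hφdef, if_neg hw]
        exact hℓ
    · -- source
      intro w hw
      simp only [hφdef, if_pos hw, hφ0def]
      show s (ψ w (Fin.last L)) = w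
      exact hψsrc w hw.1
    · -- value at v
      simp only [hφdef, if_pos hvO, hφ0def]
      funext i
      refine Fin.cases ?_ ?_ i
      · show e.symm (r (ψ v 0)) = ℓ 0
        rw [hr0, hse, e.left_inv he0]
        exact fcg ℓ (by simp)
      · intro j
        rw [Fin.cons_succ]
        exact congrFun hψv' j

lemma part1_of_singular {r s : E → V} [LocallyCompactSpace V] [T2Space V] [T2Space E]
    (hr : Continuous r) (hs : IsLocalHomeomorph s)
    (x : Σ n : ℕ, PathSpace r s (n + 1)) (hvsg : s (x.2.1 (Fin.last x.1)) ∈ Vsg r)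
    (m : ℕ) (hm : m ≤ x.1) {K : Set (FinPaths r s)} (hK : IsCompact K)
    (hW : finRng r s '' K ∈ nhds (r (x.2.1 ⟨m, by omega⟩)))
    (hex : Exhaustive r s K (finRng r s '' K)) :
    (Sum.inl (r (x.2.1 ⟨m, by omega⟩)) : FinPaths r s) ∈ K ∨
      ∃ (j : ℕ) (hj : m + j ≤ x.1), finSeg r s x.2 m j hj ∈ K := by
  classical
  set W := finRng r s '' K with hWdef
  set L := x.1 - m with hLdef
  set ℓ : Fin (L+1) → E := fun i => x.2.1 ⟨m + (i : ℕ), by have := i.isLt; omega⟩ with hldef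
  have hℓ : IsPath r s ℓ := fun i h => x.2.2 (m + i) (by omega)
  obtain ⟨O, φ, hOopen, hvO, hφcont, hφpath, hφsrc, hφv⟩ := perturb hs hr L ℓ hℓ
  set v' := s (ℓ (Fin.last L)) with hv'def
  have hveq : v' = s (x.2.1 (Fin.last x.1)) :=
    congrArg s (fcg x.2.1 (by simp [Fin.last]; omega))
  have hvsg' : v' ∈ Vsg r := by rw [hveq]; exact hvsg
  have hu : r (φ v' 0) = r (x.2.1 ⟨m, by omega⟩) := by
    rw [hφv]
    exact congrArg r (fcg x.2.1 (by simp))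
  have huW : r (x.2.1 ⟨m, by omega⟩) ∈ interior W := mem_interior_iff_mem_nhds.mpr hW
  have hφ0cont : ContinuousOn (fun w => r (φ w 0)) O :=
    hr.comp_continuousOn ((continuousOn_pi.mp hφcont) 0)
  set O' : Set V := O ∩ (fun w => r (φ w 0)) ⁻¹' interior W with hO'def
  have hO'open : IsOpen O' := hφ0cont.isOpen_inter_preimage hOopen isOpen_interior
  have hv'O' : v' ∈ O' := by
    refine ⟨hvO, ?_⟩
    show r (φ v' 0) ∈ interior W
    rw [hu]; exact huW
  -- the prefix families
  set pre0 : V → FinPaths r s := fun w => Sum.inl (r (φ w 0)) with hpre0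
  set preS : Fin (L+1) → V → FinPaths r s := fun j w =>
    Sum.inr ⟨(j : ℕ), ⟨fun i => φ w (Fin.castLE (by have := j.isLt; omega) i),
      fun i hi => hφpath w i (by have := j.isLt; have := hi; omega)⟩⟩ with hpreS
  set preO : Option (Fin (L+1)) → V → FinPaths r s := fun o => o.elim pre0 preS with hpreO
  have hcontO : ∀ o, ContinuousOn (preO o) O := by
    rintro (_ | j)
    · exact continuous_inl.comp_continuousOn hφ0cont
    · have h1 : ContinuousOn (fun w => (⟨fun i => φ w (Fin.castLE (by have := j.isLt; omega) i),
          fun i hi => hφpath w i (by have := j.isLt; have := hi; omega)⟩ :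
            PathSpace r s ((j : ℕ) + 1))) O := by
        rw [continuousOn_iff_continuous_restrict]
        refine Continuous.subtype_mk ?_ _
        refine continuous_pi fun i => ?_
        have h2 := (continuousOn_pi.mp hφcont) (Fin.castLE (by have := j.isLt; omega) i)
        rw [continuousOn_iff_continuous_restrict] at h2
        exact h2
      exact (continuous_inr.comp continuous_sigmaMk).comp_continuousOn h1
  have hval0 : preO none v' = Sum.inl (r (x.2.1 ⟨m, by omega⟩)) := by
    show Sum.inl (r (φ v' 0)) = _
    rw [hu]
  have hvalS : ∀ j : Fin (L+1),
      preO (some j) v' = finSeg r s x.2 m (j : ℕ) (by have := j.isLt; omega) := by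
    intro j
    have hfun : (fun i : Fin ((j : ℕ)+1) => φ v' (Fin.castLE (by have := j.isLt; omega) i)) =
        (fun i : Fin ((j : ℕ)+1) => x.2.1 ⟨m + (i : ℕ), by have := i.isLt; have := j.isLt; omega⟩) := by
      funext i
      rw [hφv]
      rfl
    exact congrArg Sum.inr (congrArg (Sigma.mk ((j : ℕ))) (Subtype.ext hfun))
  have hgoal_of : ∀ o : Option (Fin (L+1)), preO o v' ∈ K →
      ((Sum.inl (r (x.2.1 ⟨m, by omega⟩)) : FinPaths r s) ∈ K ∨
        ∃ (j : ℕ) (hj : m + j ≤ x.1), finSeg r s x.2 m j hj ∈ K) := by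
    rintro (_ | j) hk
    · left; rwa [hval0] at hk
    · right
      refine ⟨(j : ℕ), by have := j.isLt; omega, ?_⟩
      rw [hvalS j] at hk
      exact hk
  have hcore : ∀ o : Option (Fin (L+1)), v' ∈ closure (O' ∩ preO o ⁻¹' K) →
      ((Sum.inl (r (x.2.1 ⟨m, by omega⟩)) : FinPaths r s) ∈ K ∨
        ∃ (j : ℕ) (hj : m + j ≤ x.1), finSeg r s x.2 m j hj ∈ K) := by
    intro o hcl
    apply hgoal_of o
    have hcwa : ContinuousWithinAt (preO o) (O' ∩ preO o ⁻¹' K) v' :=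
      (((hcontO o).continuousWithinAt (by exact hvO)).mono
        (fun w hw => hw.1.1) : ContinuousWithinAt (preO o) (O' ∩ preO o ⁻¹' K) v')
    have h3 := hcwa.mem_closure_image hcl
    have hsub : preO o '' (O' ∩ preO o ⁻¹' K) ⊆ K := by
      rintro _ ⟨w, ⟨-, hwK⟩, rfl⟩; exact hwK
    have h4 := closure_mono hsub h3
    rwa [hK.isClosed.closure_eq] at h4
  have hUnion : v' ∈ closure (⋃ o : Option (Fin (L+1)), O' ∩ preO o ⁻¹' K) →
      ((Sum.inl (r (x.2.1 ⟨m, by omega⟩)) : FinPaths r s) ∈ K ∨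
        ∃ (j : ℕ) (hj : m + j ≤ x.1), finSeg r s x.2 m j hj ∈ K) := by
    intro h
    have h2 := closure_minimal (Set.iUnion_mono fun o => subset_closure)
      (isClosed_iUnion_of_finite fun o : Option (Fin (L+1)) => isClosed_closure) h
    obtain ⟨o, ho⟩ := Set.mem_iUnion.mp h2
    exact hcore o ho
  -- exhaustivity step for points of Vsce near v'
  have hD1step : ∀ w ∈ O', w ∈ Vsce r →
      w ∈ ⋃ o : Option (Fin (L+1)), O' ∩ preO o ⁻¹' K := by
    intro w hwO' hwsce
    have hq : finRng r s (Sum.inr ⟨L, ⟨φ w, hφpath w⟩⟩ : FinPaths r s) ∈ W :=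
      interior_subset hwO'.2
    obtain ⟨a, haK, hcomp⟩ := hex.2 _ hq
    rcases hcomp with h | h
    · rcases a with w' | b
      · have hw' : w' = r (φ w 0) := h
        refine Set.mem_iUnion.mpr ⟨none, hwO', ?_⟩
        show Sum.inl (r (φ w 0)) ∈ K
        rwa [← hw']
      · rcases b with ⟨n, p, hp⟩
        obtain ⟨hble, hj⟩ := h
        have hble' : n ≤ L := hble
        refine Set.mem_iUnion.mpr ⟨some ⟨n, by omega⟩, hwO', ?_⟩
        show preS ⟨n, by omega⟩ w ∈ K
        have heqa : preS ⟨n, by omega⟩ w = Sum.inr ⟨n, p, hp⟩ := by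
          refine congrArg Sum.inr (congrArg (Sigma.mk n) (Subtype.ext (funext fun i => ?_)))
          exact (hj i).symm
        rwa [heqa]
    · rcases a with w' | b
      · simp only [IsPrefixOf] at h
      · rcases b with ⟨n, p, hp⟩
        obtain ⟨hge, hj⟩ := h
        have hge' : L ≤ n := hge
        rcases Nat.lt_or_ge L n with hgt | hle2
        · exfalso
          have h1 : w = s (φ w (Fin.last L)) := (hφsrc w hwO'.1).symm
          have h2 : φ w (Fin.last L) = p ⟨L, by omega⟩ := hj (Fin.last L)
          have h3 := hp L (by omega)
          refine hwsce (subset_closure ⟨p ⟨L + 1, by omega⟩, ?_⟩)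
          rw [h1, h2]
          exact h3.symm
        · have hnL : n = L := by omega
          refine Set.mem_iUnion.mpr ⟨some ⟨n, by omega⟩, hwO', ?_⟩
          show preS ⟨n, by omega⟩ w ∈ K
          have heqa : preS ⟨n, by omega⟩ w = Sum.inr ⟨n, p, hp⟩ := by
            refine congrArg Sum.inr (congrArg (Sigma.mk n) (Subtype.ext (funext fun i => ?_)))
            exact (hj (Fin.castLE (show n + 1 ≤ L + 1 by omega) i)).trans (fcg p rfl)
          rwa [heqa]
  rw [Vsg, Vrg] at hvsg'
  simp only [Set.mem_compl_iff, Set.mem_diff, not_and, not_not] at hvsg'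
  by_cases hfin : v' ∈ Vfin r
  · -- v' ∈ closure Vsce
    have hvc : v' ∈ closure (Vsce r) := hvsg' hfin
    apply hUnion
    have h1 : v' ∈ closure (O' ∩ Vsce r) := hO'open.inter_closure ⟨hv'O', hvc⟩
    refine closure_mono ?_ h1
    rintro w ⟨hwO', hwsce⟩
    exact hD1step w hwO' hwsce
  · -- v' ∉ Vfin
    by_contra hgoal
    have hvnc : v' ∉ closure (⋃ o : Option (Fin (L+1)), O' ∩ preO o ⁻¹' K) :=
      fun h => hgoal (hUnion h)
    set M : Set V := O' ∩ (closure (⋃ o : Option (Fin (L+1)), O' ∩ preO o ⁻¹' K))ᶜ with hMdef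
    have hMopen : IsOpen M := hO'open.inter isClosed_closure.isOpen_compl
    have hvM : v' ∈ M := ⟨hv'O', hvnc⟩
    have hpre : r ⁻¹' M ⊆ edgeSet r s K (L+1) := by
      intro g hg
      set w := r g with hwdef
      have hwO' : w ∈ O' := hg.1
      have hwnc : w ∉ ⋃ o : Option (Fin (L+1)), O' ∩ preO o ⁻¹' K :=
        fun hc => hg.2 (subset_closure hc)
      set qf : Fin (L+2) → E := fun i => if h : (i : ℕ) < L+1 then φ w ⟨(i : ℕ), h⟩ else g
        with hqfdef
      have hqval : ∀ (i : ℕ) (h : i < L+2),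
          qf ⟨i, h⟩ = if h2 : i < L+1 then φ w ⟨i, h2⟩ else g := fun i h => rfl
      have hq0 : qf 0 = φ w 0 := by
        refine (dif_pos (show ((0 : Fin (L+2)) : ℕ) < L+1 by simp)).trans ?_
        exact fcg (φ w) (by simp)
      have hqpath : IsPath r s qf := by
        intro i h
        rw [hqval i (by omega), hqval (i+1) (by omega)]
        by_cases hi : i + 1 < L + 1
        · rw [dif_pos (show i < L+1 by omega), dif_pos hi]
          exact hφpath w i hi
        · have hiL : i = L := by omega
          subst hiL
          rw [dif_pos (show L < L+1 by omega), dif_neg (by omega)]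
          have h1 : s (φ w ⟨L, by omega⟩) = w := hφsrc w hwO'.1
          rw [h1]
      have hqW : finRng r s (Sum.inr ⟨L+1, ⟨qf, hqpath⟩⟩ : FinPaths r s) ∈ W := by
        show r (qf 0) ∈ W
        rw [hq0]
        exact interior_subset hwO'.2
      obtain ⟨a, haK, hcomp⟩ := hex.2 _ hqW
      rcases hcomp with h | h
      · rcases a with w' | b
        · exfalso
          apply hwnc
          have hw' : w' = r (qf 0) := h
          refine Set.mem_iUnion.mpr ⟨none, hwO', ?_⟩
          show Sum.inl (r (φ w 0)) ∈ K
          rw [← hq0, ← hw']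
          exact haK
        · rcases b with ⟨n, p, hp⟩
          obtain ⟨hble, hj⟩ := h
          have hble' : n ≤ L + 1 := hble
          rcases Nat.lt_or_ge n (L+1) with hlt | hge2
          · exfalso
            apply hwnc
            refine Set.mem_iUnion.mpr ⟨some ⟨n, by omega⟩, hwO', ?_⟩
            show preS ⟨n, by omega⟩ w ∈ K
            have heqa : preS ⟨n, by omega⟩ w = Sum.inr ⟨n, p, hp⟩ := by
              refine congrArg Sum.inr (congrArg (Sigma.mk n) (Subtype.ext (funext fun i => ?_)))
              refine ((hj i).trans ?_).symm
              refine (dif_pos (show (i : ℕ) < L+1 by have := i.isLt; omega)).trans ?_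
              rfl
            rwa [heqa]
          · have hnL : n = L + 1 := by omega
            refine ⟨⟨n, p, hp⟩, haK, show L + 1 < n + 1 by omega, ?_⟩
            refine ((hj ⟨L+1, show L + 1 < n + 1 by omega⟩).trans ?_)
            exact dif_neg (show ¬(L + 1 < L + 1) by omega)
      · rcases a with w' | b
        · simp only [IsPrefixOf] at h
        · rcases b with ⟨n, p, hp⟩
          obtain ⟨hge, hj⟩ := h
          have hge' : L + 1 ≤ n := hge
          refine ⟨⟨n, p, hp⟩, haK, show L + 1 < n + 1 by omega, ?_⟩
          refine (hj ⟨L+1, show L + 1 < L + 2 by omega⟩).symm.trans ?_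
          exact dif_neg (show ¬(L + 1 < L + 1) by omega)
    obtain ⟨Cc, hCccomp, hvCc, hCcsub⟩ := exists_compact_subset hMopen hvM
    refine hfin ⟨interior Cc, isOpen_interior, hvCc, ?_⟩
    have hsub2 : r ⁻¹' closure (interior Cc) ⊆ edgeSet r s K (L+1) := fun g hgc =>
      hpre (hCcsub (closure_minimal interior_subset hCccomp.isClosed hgc))
    exact (isCompact_edgeSet hK (L+1)).of_isClosed_subset (isClosed_closure.preimage hr) hsub2

end Aux

/-- For a topological graph `E`, the boundary-path space
`∂E = E^∞ ⊔ {μ ∈ E^* : s(μ) ∈ E^0_sg}` coincides with the set `∂_Y E` of Yeend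
boundary paths. -/
theorem boundary_paths_eq_yeend_boundary_paths
    [TopologicalSpace V] [TopologicalSpace E]
    [LocallyCompactSpace V] [T2Space V] [LocallyCompactSpace E] [T2Space E]
    (r s : E → V) (hr : Continuous r) (hs : IsLocalHomeomorph s) :
    {p : FinPaths r s ⊕ InfPaths r s |
        Sum.elim (fun f => finSrc r s f ∈ Vsg r) (fun _ => True) p} =
      {p : FinPaths r s ⊕ InfPaths r s |
        Sum.elim (YeendFin r s) (YeendInf r s) p} := by
  ext p
  simp only [Set.mem_setOf_eq]
  rcases p with μ | μ
  · simp only [Sum.elim_inl]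
    constructor
    · intro hv
      constructor
      · rintro x rfl m hm K hK hW hex
        exact part1_of_singular hr hs x hv m hm hK hW hex
      · intro K hK hW hex
        exact part2_of_singular hr hv hK hW hex
    · intro hY
      by_contra hv
      have hvrg : finSrc r s μ ∈ Vrg r := not_not.mp hv
      obtain ⟨K, hK, hW, hex, hnot⟩ := regular_witness (s := s) hr hvrg
      exact hnot (hY.2 K hK hW hex)
  · simp only [Sum.elim_inr]
    exact iff_of_true trivial (yeendInf_all μ)

end TopGraphPaper
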